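/- For perturbations ΔA ∈ ℝ^{m×n}, Δb ∈ ℝ^m, an approximate solution y ∈ ℝⁿ, residual r_y = b - Ay, and θ > 0, the perturbed normal equation (A+ΔA)ᵀΣ_{pq}(b+Δb-(A+ΔA)y) = 0 holds if and only if J_ILS·[vec(ΔA); θΔb] = -AᵀΣ_{pq}r_y + ΔAᵀΣ_{pq}(ΔAy - Δb), where J_ILS = [ I_n ⊗ r_yᵀΣ_{pq} - AᵀΣ_{pq}(yᵀ ⊗ I_m), θ^{-1}AᵀΣ_{pq} ]. -/

import Mathlib

open Matrix Kronecker

noncomputable section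

/-- The signature matrix `Σ_{pq} = diag(I_p, -I_q)`. -/
def Sig (p q : ℕ) : Matrix (Fin p ⊕ Fin q) (Fin p ⊕ Fin q) ℝ :=
  Matrix.fromBlocks 1 0 0 (-1)

/-- Column-stacking vectorization of a matrix (indexed by (column, row)). -/
def vec {m n : Type*} (A : Matrix m n ℝ) : n × m → ℝ := fun ji => A ji.2 ji.1

/-- The matrix `J_ILS = [ I_n ⊗ r_yᵀΣ − AᵀΣ(yᵀ ⊗ I_m) , θ⁻¹ AᵀΣ ]`. -/
def JILS (p q n : ℕ) (A : Matrix (Fin p ⊕ Fin q) (Fin n) ℝ)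
    (ry : Fin p ⊕ Fin q → ℝ) (y : Fin n → ℝ) (θ : ℝ) :
    Matrix (Fin n) ((Fin n × (Fin p ⊕ Fin q)) ⊕ (Fin p ⊕ Fin q)) ℝ :=
  Matrix.fromCols
    ((Matrix.reindex (Equiv.prodPUnit (Fin n)) (Equiv.refl _)
        ((1 : Matrix (Fin n) (Fin n) ℝ) ⊗ₖ Matrix.replicateRow Unit ((Sig p q).vecMul ry))) -
      (Aᵀ * Sig p q) *
        (Matrix.reindex (Equiv.punitProd (Fin p ⊕ Fin q)) (Equiv.refl _)
          (Matrix.replicateRow Unit y ⊗ₖ (1 : Matrix (Fin p ⊕ Fin q) (Fin p ⊕ Fin q) ℝ))))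
    (θ⁻¹ • (Aᵀ * Sig p q))

lemma kronA {α β : Type*} [Fintype α] [Fintype β] [DecidableEq β] (w : α → ℝ) (ΔA : Matrix α β ℝ) :
    (Matrix.reindex (Equiv.prodPUnit β) (Equiv.refl _)
      ((1 : Matrix β β ℝ) ⊗ₖ Matrix.replicateRow Unit w)).mulVec (_root_.vec ΔA) = ΔAᵀ.mulVec w := by
  funext i
  simp [Matrix.mulVec, dotProduct, _root_.vec, Fintype.sum_prod_type, Matrix.one_apply, mul_comm]

lemma kronB {α β : Type*} [Fintype α] [Fintype β] [DecidableEq α] (y : β → ℝ) (ΔA : Matrix α β ℝ) :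
    (Matrix.reindex (Equiv.punitProd α) (Equiv.refl _)
      (Matrix.replicateRow Unit y ⊗ₖ (1 : Matrix α α ℝ))).mulVec (_root_.vec ΔA) = ΔA.mulVec y := by
  funext i
  simp [Matrix.mulVec, dotProduct, _root_.vec, Fintype.sum_prod_type, Matrix.one_apply, mul_comm]

lemma sig_vecMul (p q : ℕ) (v : Fin p ⊕ Fin q → ℝ) :
    (Sig p q).vecMul v = (Sig p q).mulVec v := by
  nth_rewrite 1 [show Sig p q = (Sig p q)ᵀ by simp [Sig, Matrix.fromBlocks_transpose]]
  exact Matrix.vecMul_transpose _ _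

/-- The perturbed normal equation `(A+ΔA)ᵀΣ(b+Δb−(A+ΔA)y) = 0` holds iff
`J_ILS [vec ΔA; θΔb] = −AᵀΣ r_y + ΔAᵀΣ(ΔA y − Δb)`, where `r_y = b − Ay`. -/
theorem stmt4 (p q n : ℕ) (A ΔA : Matrix (Fin p ⊕ Fin q) (Fin n) ℝ)
    (b Δb : Fin p ⊕ Fin q → ℝ) (y : Fin n → ℝ) (θ : ℝ) (hθ : 0 < θ) :
    (A + ΔA)ᵀ.mulVec ((Sig p q).mulVec (b + Δb - (A + ΔA).mulVec y)) = 0 ↔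
      (JILS p q n A (b - A.mulVec y) y θ).mulVec (Sum.elim (_root_.vec ΔA) (θ • Δb)) =
        -(Aᵀ * Sig p q).mulVec (b - A.mulVec y) +
          (ΔAᵀ * Sig p q).mulVec (ΔA.mulVec y - Δb) := by
  have hJ : (JILS p q n A (b - A.mulVec y) y θ).mulVec (Sum.elim (_root_.vec ΔA) (θ • Δb)) =
      ΔAᵀ.mulVec ((Sig p q).mulVec (b - A.mulVec y)) -
        (Aᵀ * Sig p q).mulVec (ΔA.mulVec y) + (Aᵀ * Sig p q).mulVec Δb := by
    rw [JILS, Matrix.fromCols_mulVec_sumElim, Matrix.sub_mulVec, sig_vecMul, kronA,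
      ← Matrix.mulVec_mulVec, kronB, Matrix.smul_mulVec, Matrix.mulVec_smul,
      smul_smul, inv_mul_cancel₀ hθ.ne', one_smul]
  have key : (A + ΔA)ᵀ.mulVec ((Sig p q).mulVec (b + Δb - (A + ΔA).mulVec y)) =
      (JILS p q n A (b - A.mulVec y) y θ).mulVec (Sum.elim (_root_.vec ΔA) (θ • Δb)) -
        (-(Aᵀ * Sig p q).mulVec (b - A.mulVec y) +
          (ΔAᵀ * Sig p q).mulVec (ΔA.mulVec y - Δb)) := by
    rw [hJ]
    simp only [← Matrix.mulVec_mulVec, Matrix.transpose_add, Matrix.add_mulVec,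
      Matrix.mulVec_add, Matrix.mulVec_sub, Matrix.sub_mulVec]
    abel
  rw [key, sub_eq_zero]

end
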